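/- Let X be a strong PP-space, Y a topological space and (Z, λ) a locally convex equiconnected space. Let f : X × Y → Z be such that the map x ↦ f(x,y) is continuous for every y ∈ Y and the set {x ∈ X : the map y ↦ f(x,y) is continuous} is dense in X. Then f is the pointwise limit of a sequence of continuous maps X × Y → Z (i.e. (X, Y, Z) is a Rudin 0-triple). -/

import Mathlib

open Set Function Filter Topology

universe u

/-- An *equiconnecting* map on `Z`: a map `λ : Z × Z × [0,1] → Z`, continuous on
`Z × Z × [0,1]`, with `λ(x,y,0) = x`, `λ(x,y,1) = y` and `λ(x,x,t) = x`. -/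
structure IsEquiconnecting {Z : Type*} [TopologicalSpace Z] (lam : Z → Z → ℝ → Z) : Prop where
  continuousOn : ContinuousOn (fun p : Z × Z × ℝ => lam p.1 p.2.1 p.2.2)
    (Set.univ ×ˢ Set.univ ×ˢ Set.Icc (0 : ℝ) 1)
  map_zero : ∀ x y : Z, lam x y 0 = x
  map_one : ∀ x y : Z, lam x y 1 = y
  map_diag : ∀ x : Z, ∀ t ∈ Set.Icc (0 : ℝ) 1, lam x x t = x

/-- `lambdaIter lam n` is the map `λ_{n+1} : Z^{n+1} × S_{n+1} → Z` from the paper,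
defined recursively. -/
noncomputable def lambdaIter {Z : Type*} (lam : Z → Z → ℝ → Z) :
    (n : ℕ) → (Fin (n + 1) → Z) → (Fin (n + 1) → ℝ) → Z
  | 0, x, _ => x 0
  | n + 1, x, a =>
      if 0 < a 0 + a 1 then
        lambdaIter lam n
          (Fin.cons (lam (x 0) (x 1) (a 1 / (a 0 + a 1))) fun i => x i.succ.succ)
          (Fin.cons (a 0 + a 1) fun i => a i.succ.succ)
      else
        lambdaIter lam n (fun i => x i.succ) fun i => a i.succ

/-- `lambdaIterSet lam A n` is the set `λ^n(A)`:  `λ^0(A) = A` and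
`λ^{n+1}(A) = λ(λ^n(A) × A × [0,1])`. -/
def lambdaIterSet {Z : Type*} (lam : Z → Z → ℝ → Z) (A : Set Z) : ℕ → Set Z
  | 0 => A
  | n + 1 => (fun p : Z × Z × ℝ => lam p.1 p.2.1 p.2.2) ''
      (lambdaIterSet lam A n ×ˢ A ×ˢ Set.Icc (0 : ℝ) 1)

/-- `λ^∞(A) = ⋃_{n ≥ 1} λ^n(A)`. -/
def lambdaInftySet {Z : Type*} (lam : Z → Z → ℝ → Z) (A : Set Z) : Set Z :=
  ⋃ n : ℕ, lambdaIterSet lam A (n + 1)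

/-- An equiconnected space `(Z, λ)` is locally convex if every point has arbitrarily small
neighborhoods `V` with `λ^∞(V)` inside a given neighborhood. -/
def IsLocallyConvexEquiconnected {Z : Type*} [TopologicalSpace Z] (lam : Z → Z → ℝ → Z) :
    Prop :=
  ∀ z : Z, ∀ U ∈ nhds z, ∃ V ∈ nhds z, lambdaInftySet lam V ⊆ U

/-- A map is Baire-one if it is the pointwise limit of a sequence of continuous maps. -/
def BaireOne {Y Z : Type*} [TopologicalSpace Y] [TopologicalSpace Z] (g : Y → Z) : Prop :=
  ∃ h : ℕ → Y → Z, (∀ n, Continuous (h n)) ∧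
    ∀ y, Filter.Tendsto (fun n => h n y) Filter.atTop (nhds (g y))

/-- A locally finite partition of unity on `X`: continuous `[0,1]`-valued functions whose
supports (closures of the sets where they are nonzero) form a locally finite family and whose
pointwise sum is `1`. -/
def IsLocFinPartitionOfUnity {I X : Type*} [TopologicalSpace X] (φ : I → X → ℝ) : Prop :=
  (∀ i, Continuous (φ i)) ∧ (∀ i x, φ i x ∈ Set.Icc (0 : ℝ) 1) ∧
    (LocallyFinite fun i => closure (Function.support (φ i))) ∧ ∀ x, ∑ᶠ i, φ i x = 1

/-- A strong PP-space: for every dense `D ⊆ X` there are a sequence of locally finite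
partitions of unity and families of points of `D` such that points attached to the supports
containing `x` converge to `x` uniformly in the index, in the sense of condition (3). -/
def IsStrongPPSpace (X : Type*) [TopologicalSpace X] : Prop :=
  ∀ D : Set X, Dense D →
    ∃ (I : ℕ → Type u) (φ : ∀ n, I n → X → ℝ) (p : ∀ n, I n → X),
      (∀ n, IsLocFinPartitionOfUnity (φ n)) ∧ (∀ n i, p n i ∈ D) ∧
      ∀ x : X, ∀ U ∈ nhds x, ∃ n₀ : ℕ, ∀ n ≥ n₀, ∀ i : I n,
        x ∈ closure (Function.support (φ n i)) → p n i ∈ U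

/-- A zero set: the preimage of `{0}` under a continuous function `X → [0,1]`. -/
def IsZeroSet {X : Type*} [TopologicalSpace X] (A : Set X) : Prop :=
  ∃ f : X → ℝ, Continuous f ∧ (∀ x, f x ∈ Set.Icc (0 : ℝ) 1) ∧ A = f ⁻¹' {0}

/-- A cozero set: the preimage of `(0,1]` under a continuous function `X → [0,1]`. -/
def IsCozeroSet {X : Type*} [TopologicalSpace X] (A : Set X) : Prop :=
  ∃ f : X → ℝ, Continuous f ∧ (∀ x, f x ∈ Set.Icc (0 : ℝ) 1) ∧ A = f ⁻¹' Set.Ioc (0 : ℝ) 1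

/-- A functionally ambiguous set: simultaneously a countable union of zero sets and a
countable intersection of cozero sets. -/
def IsFunctionallyAmbiguous {X : Type*} [TopologicalSpace X] (A : Set X) : Prop :=
  (∃ F : ℕ → Set X, (∀ n, IsZeroSet (F n)) ∧ A = ⋃ n, F n) ∧
    ∃ B : ℕ → Set X, (∀ n, IsCozeroSet (B n)) ∧ A = ⋂ n, B n

/-- A discrete family of sets: every point has a neighborhood meeting at most one member. -/
def IsDiscreteFamily {I X : Type*} [TopologicalSpace X] (A : I → Set X) : Prop :=
  ∀ x : X, ∃ U ∈ nhds x, {i : I | (U ∩ A i).Nonempty}.Subsingleton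

/-- Weakly collectionwise normal: every discrete family of zero sets can be separated by a
discrete family of cozero sets. -/
def WeaklyCollectionwiseNormal (X : Type*) [TopologicalSpace X] : Prop :=
  ∀ (S : Type u) (F : S → Set X), (∀ s, IsZeroSet (F s)) → IsDiscreteFamily F →
    ∃ U : S → Set X, (∀ s, IsCozeroSet (U s)) ∧ IsDiscreteFamily U ∧ ∀ s, F s ⊆ U s

/-- A contracting structure on `Z`: a continuous `γ : Z × [0,1] → Z` with `γ(z,0) = z` and
`γ(z,1) = z₀`. -/
structure IsContracting {Z : Type*} [TopologicalSpace Z] (γ : Z → ℝ → Z) (z₀ : Z) :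
    Prop where
  continuousOn : ContinuousOn (fun p : Z × ℝ => γ p.1 p.2) (Set.univ ×ˢ Set.Icc (0 : ℝ) 1)
  map_zero : ∀ z : Z, γ z 0 = z
  map_one : ∀ z : Z, γ z 1 = z₀

/-! ### Auxiliary machinery for Statement 8 -/

section RudinAux
set_option maxHeartbeats 1000000

universe v w

variable {Z : Type*} [TopologicalSpace Z]

/-- Left-fold convex combination along a list of (point, weight) pairs. -/
noncomputable def comb (lam : Z → Z → ℝ → Z) (z₀ : Z) : List (Z × ℝ) → Z
  | [] => z₀
  | [(z, _)] => z
  | (z₁, a₁) :: (z₂, a₂) :: l =>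
      if 0 < a₁ + a₂ then comb lam z₀ ((lam z₁ z₂ (a₂ / (a₁ + a₂)), a₁ + a₂) :: l)
      else comb lam z₀ ((z₂, a₂) :: l)
  termination_by l => l.length
  decreasing_by all_goals simp [List.length]

variable {lam : Z → Z → ℝ → Z} {z₀ : Z}

set_option linter.unusedSectionVars false

lemma comb_cons_cons (z₁ z₂ : Z) (a₁ a₂ : ℝ) (l : List (Z × ℝ)) :
    comb lam z₀ ((z₁, a₁) :: (z₂, a₂) :: l) =
      if 0 < a₁ + a₂ then comb lam z₀ ((lam z₁ z₂ (a₂ / (a₁ + a₂)), a₁ + a₂) :: l)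
      else comb lam z₀ ((z₂, a₂) :: l) := by rw [comb]

lemma comb_zero_head (hlam : IsEquiconnecting lam) (z : Z) (q : Z × ℝ) (l : List (Z × ℝ)) :
    comb lam z₀ ((z, 0) :: q :: l) = comb lam z₀ (q :: l) := by
  obtain ⟨z₂, a₂⟩ := q
  rw [comb_cons_cons]
  by_cases h : 0 < (0:ℝ) + a₂
  · rw [if_pos h]
    have ha₂ : a₂ ≠ 0 := by rw [zero_add] at h; exact ne_of_gt h
    rw [zero_add, div_self ha₂, hlam.map_one]
  · rw [if_neg h]

lemma comb_filter_aux (hlam : IsEquiconnecting lam) :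
    ∀ (l : List (Z × ℝ)), (∀ p ∈ l, (0:ℝ) ≤ p.2) → ∀ (z : Z) (a : ℝ), 0 < a →
      comb lam z₀ ((z, a) :: l) = comb lam z₀ ((z, a) :: l.filter (fun p => p.2 ≠ 0)) := by
  intro l
  induction l with
  | nil => intro _ z a _; simp
  | cons q l' ih =>
    intro hnn z a ha
    obtain ⟨z₂, a₂⟩ := q
    have ha₂ : (0:ℝ) ≤ a₂ := hnn _ (List.mem_cons_self)
    by_cases h2 : a₂ = 0
    · subst h2
      have hfil : ((z₂, (0:ℝ)) :: l').filter (fun p => p.2 ≠ 0) =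
          l'.filter (fun p => p.2 ≠ 0) := by
        simp [List.filter_cons]
      rw [hfil, comb_cons_cons, if_pos (by linarith), add_zero, zero_div,
        hlam.map_zero]
      exact ih (fun p hp => hnn p (List.mem_cons_of_mem _ hp)) z a ha
    · have h2' : 0 < a₂ := lt_of_le_of_ne ha₂ (Ne.symm h2)
      have hfil : ((z₂, a₂) :: l').filter (fun p => p.2 ≠ 0) =
          (z₂, a₂) :: l'.filter (fun p => p.2 ≠ 0) := by
        simp [List.filter_cons, h2]
      rw [hfil, comb_cons_cons, comb_cons_cons, if_pos (by linarith), if_pos (by linarith)]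
      exact ih (fun p hp => hnn p (List.mem_cons_of_mem _ hp)) _ _ (by linarith)

lemma comb_filter (hlam : IsEquiconnecting lam) :
    ∀ (l : List (Z × ℝ)), (∀ p ∈ l, (0:ℝ) ≤ p.2) →
      l.filter (fun p => p.2 ≠ 0) ≠ [] →
      comb lam z₀ l = comb lam z₀ (l.filter (fun p => p.2 ≠ 0)) := by
  intro l
  induction l with
  | nil => intro _ h; simp at h
  | cons q l' ih =>
    intro hnn hne
    obtain ⟨z, a⟩ := q
    have ha : (0:ℝ) ≤ a := hnn _ (List.mem_cons_self)
    by_cases h0 : a = 0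
    · subst h0
      have hfil : ((z, (0:ℝ)) :: l').filter (fun p => p.2 ≠ 0) =
          l'.filter (fun p => p.2 ≠ 0) := by simp [List.filter_cons]
      rw [hfil] at hne ⊢
      have hl' : l' ≠ [] := by rintro rfl; simp at hne
      obtain ⟨q', l'', rfl⟩ := List.exists_cons_of_ne_nil hl'
      rw [comb_zero_head hlam]
      exact ih (fun p hp => hnn p (List.mem_cons_of_mem _ hp)) hne
    · have ha' : 0 < a := lt_of_le_of_ne ha (Ne.symm h0)
      have hfil : ((z, a) :: l').filter (fun p => p.2 ≠ 0) =
          (z, a) :: l'.filter (fun p => p.2 ≠ 0) := by simp [List.filter_cons, h0]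
      rw [hfil]
      exact comb_filter_aux hlam l' (fun p hp => hnn p (List.mem_cons_of_mem _ hp)) z a ha'

lemma mem_lambdaIterSet_succ {V : Set Z} {m : ℕ} {z v : Z} {t : ℝ}
    (hz : z ∈ lambdaIterSet lam V m) (hv : v ∈ V) (ht : t ∈ Set.Icc (0:ℝ) 1) :
    lam z v t ∈ lambdaIterSet lam V (m + 1) :=
  ⟨(z, v, t), ⟨hz, hv, ht⟩, rfl⟩

lemma comb_mem_iUnion {V : Set Z} :
    ∀ (l : List (Z × ℝ)) (z : Z) (a : ℝ) (m : ℕ),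
      z ∈ lambdaIterSet lam V m → 0 ≤ a →
      (∀ p ∈ l, p.1 ∈ V ∧ 0 ≤ p.2) →
      comb lam z₀ ((z, a) :: l) ∈ ⋃ k : ℕ, lambdaIterSet lam V k := by
  intro l
  induction l with
  | nil => intro z a m hz _ _; exact Set.mem_iUnion.2 ⟨m, by simpa [comb] using hz⟩
  | cons q l' ih =>
    intro z a m hz ha hl
    obtain ⟨z₂, a₂⟩ := q
    obtain ⟨hz₂, ha₂⟩ := hl _ (List.mem_cons_self)
    have hl' := fun p hp => hl p (List.mem_cons_of_mem _ hp)
    rw [comb_cons_cons]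
    by_cases h : 0 < a + a₂
    · rw [if_pos h]
      have ht : a₂ / (a + a₂) ∈ Set.Icc (0:ℝ) 1 :=
        ⟨div_nonneg ha₂ h.le, div_le_one_of_le₀ (by linarith) h.le⟩
      exact ih _ _ (m + 1) (mem_lambdaIterSet_succ hz hz₂ ht) h.le hl'
    · rw [if_neg h]
      exact ih _ _ 0 hz₂ ha₂ hl'

lemma lambdaIterSet_subset_infty (hlam : IsEquiconnecting lam) {V : Set Z} (hV : V.Nonempty) :
    ∀ m, lambdaIterSet lam V m ⊆ lambdaInftySet lam V := by
  intro m
  rcases m with _ | m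
  · intro z hz
    refine Set.mem_iUnion.2 ⟨0, ?_⟩
    exact ⟨(z, z, 0), ⟨hz, hz, le_rfl, zero_le_one⟩, hlam.map_zero z z⟩
  · exact Set.subset_iUnion (fun k => lambdaIterSet lam V (k + 1)) m

lemma comb_mem_infty (hlam : IsEquiconnecting lam) {V : Set Z} (hV : V.Nonempty)
    (l : List (Z × ℝ)) (z : Z) (a : ℝ) (hz : z ∈ V) (ha : 0 ≤ a)
    (hl : ∀ p ∈ l, p.1 ∈ V ∧ 0 ≤ p.2) :
    comb lam z₀ ((z, a) :: l) ∈ lambdaInftySet lam V := by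
  have := comb_mem_iUnion (lam := lam) (z₀ := z₀) l z a 0 hz ha hl
  obtain ⟨k, hk⟩ := Set.mem_iUnion.1 this
  exact lambdaIterSet_subset_infty hlam hV k hk

/-- Continuity of `comb` over a list of continuous points and continuous nonnegative
weights summing to 1, with a distinguished continuous head. -/
lemma comb_continuous_aux (hlam : IsEquiconnecting lam) :
    ∀ n : ℕ, ∀ {Q : Type v} [TopologicalSpace Q] {ι : Type w} (l : List ι)
      (hd : Q → Z) (h0 : Q → ℝ) (pt : ι → Q → Z) (w : ι → Q → ℝ),
      l.length = n →
      Continuous hd → Continuous h0 → (∀ i ∈ l, Continuous (pt i)) →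
      (∀ i ∈ l, Continuous (w i)) →
      (∀ q, 0 ≤ h0 q) → (∀ i ∈ l, ∀ q, 0 ≤ w i q) →
      (∀ q, h0 q + (l.map fun i => w i q).sum = 1) →
      Continuous fun q => comb lam z₀ ((hd q, h0 q) :: l.map fun i => (pt i q, w i q)) := by
  intro n
  induction n with
  | zero =>
    intro Q _ ι l hd h0 pt w hlen hhd hh0 hpt hw hh0nn hwnn hsum
    obtain rfl := List.length_eq_zero_iff.mp hlen
    simpa [comb] using hhd
  | succ n ih =>
    intro Q _ ι l hd h0 pt w hlen hhd hh0 hpt hw hh0nn hwnn hsum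
    obtain ⟨i₁, l', rfl⟩ := List.exists_cons_of_ne_nil (show l ≠ [] by rintro rfl; simp at hlen)
    have hlen' : l'.length = n := by simpa using hlen
    have hw₁ : Continuous (w i₁) := hw i₁ (List.mem_cons_self)
    have hpt₁ : Continuous (pt i₁) := hpt i₁ (List.mem_cons_self)
    have hw₁nn : ∀ q, 0 ≤ w i₁ q := hwnn i₁ (List.mem_cons_self)
    have hptl' : ∀ i ∈ l', Continuous (pt i) := fun i hi => hpt i (List.mem_cons_of_mem _ hi)
    have hwl' : ∀ i ∈ l', Continuous (w i) := fun i hi => hw i (List.mem_cons_of_mem _ hi)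
    have hwl'nn : ∀ i ∈ l', ∀ q, 0 ≤ w i q := fun i hi => hwnn i (List.mem_cons_of_mem _ hi)
    rw [continuous_iff_continuousAt]
    intro q₀
    by_cases hpos : 0 < h0 q₀ + w i₁ q₀
    · -- positive case: reduce on the open set O
      set O : Set Q := {q | 0 < h0 q + w i₁ q} with hO_def
      have hO : IsOpen O := isOpen_lt continuous_const (hh0.add hw₁)
      have hsub : Continuous (fun q : ↥O =>
          comb lam z₀ ((hd q, h0 q) :: (i₁ :: l').map fun i => (pt i (q:Q), w i (q:Q)))) := by
        have heq : (fun q : ↥O =>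
            comb lam z₀ ((hd q, h0 q) :: (i₁ :: l').map fun i => (pt i (q:Q), w i (q:Q)))) =
            fun q : ↥O =>
              comb lam z₀ ((lam (hd q) (pt i₁ q) (w i₁ q / (h0 q + w i₁ q)),
                  h0 q + w i₁ q) :: l'.map fun i => (pt i (q:Q), w i (q:Q))) := by
          funext q
          simp only [List.map_cons]
          rw [comb_cons_cons, if_pos (show (0:ℝ) < h0 q.1 + w i₁ q.1 from q.2)]
        rw [heq]
        have hden : ∀ q : ↥O, h0 (q:Q) + w i₁ (q:Q) ≠ 0 := fun q => ne_of_gt q.2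
        have hratio : Continuous fun q : ↥O => w i₁ (q:Q) / (h0 (q:Q) + w i₁ (q:Q)) :=
          (hw₁.comp continuous_subtype_val).div
            ((hh0.comp continuous_subtype_val).add (hw₁.comp continuous_subtype_val)) hden
        have hhd' : Continuous fun q : ↥O =>
            lam (hd q) (pt i₁ q) (w i₁ q / (h0 q + w i₁ q)) := by
          refine ContinuousOn.comp_continuous hlam.continuousOn
            (Continuous.prodMk (hhd.comp continuous_subtype_val)
              (Continuous.prodMk (hpt₁.comp continuous_subtype_val) hratio)) ?_
          intro q
          refine ⟨trivial, trivial, div_nonneg (hw₁nn q) (le_of_lt q.2), ?_⟩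
          exact div_le_one_of_le₀ (by have := hh0nn (q:Q); linarith) (le_of_lt q.2)
        exact ih (Q := ↥O) l' _ _ (fun i q => pt i (q:Q)) (fun i q => w i (q:Q)) hlen'
          hhd' ((hh0.comp continuous_subtype_val).add (hw₁.comp continuous_subtype_val))
          (fun i hi => (hptl' i hi).comp continuous_subtype_val)
          (fun i hi => (hwl' i hi).comp continuous_subtype_val)
          (fun q => by have := hh0nn (q:Q); have := hw₁nn (q:Q); linarith)
          (fun i hi q => hwl'nn i hi (q:Q))
          (fun q => by have := hsum (q:Q); simp only [List.map_cons, List.sum_cons] at this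
                       linarith)
      have hcO : ContinuousOn (fun q =>
          comb lam z₀ ((hd q, h0 q) :: (i₁ :: l').map fun i => (pt i q, w i q))) O :=
        continuousOn_iff_continuous_restrict.mpr hsub
      exact hcO.continuousAt (hO.mem_nhds hpos)
    · -- degenerate case: h0 q₀ = w i₁ q₀ = 0
      have h00 : h0 q₀ = 0 := le_antisymm (by nlinarith [hw₁nn q₀]) (hh0nn q₀)
      have hw10 : w i₁ q₀ = 0 := le_antisymm (by nlinarith [hh0nn q₀]) (hw₁nn q₀)
      have hsum₀ := hsum q₀
      simp only [List.map_cons, List.sum_cons, h00, hw10, zero_add] at hsum₀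
      have hl'ne : l' ≠ [] := by rintro rfl; simp at hsum₀
      obtain ⟨i₂, l'', rfl⟩ := List.exists_cons_of_ne_nil hl'ne
      set K : Set ℝ := Set.Icc (0:ℝ) 1 with hK_def
      haveI : CompactSpace ↥K := isCompact_iff_compactSpace.mp isCompact_Icc
      set H : Q × ↥K → Z := fun p =>
        comb lam z₀ ((lam (hd p.1) (pt i₁ p.1) (p.2 : ℝ), h0 p.1 + w i₁ p.1)
          :: (i₂ :: l'').map fun i => (pt i p.1, w i p.1)) with hH_def
      have hHcont : Continuous H := by
        have hfst : Continuous fun p : Q × ↥K => p.1 := continuous_fst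
        have hhd' : Continuous fun p : Q × ↥K => lam (hd p.1) (pt i₁ p.1) (p.2 : ℝ) := by
          refine ContinuousOn.comp_continuous hlam.continuousOn
            (Continuous.prodMk (hhd.comp hfst)
              (Continuous.prodMk (hpt₁.comp hfst)
                (continuous_subtype_val.comp continuous_snd))) ?_
          intro p
          exact ⟨trivial, trivial, p.2.2⟩
        refine ih (Q := Q × ↥K) (i₂ :: l'') _ _ (fun i p => pt i p.1) (fun i p => w i p.1)
          (by simpa using hlen') hhd'
          ((hh0.comp hfst).add (hw₁.comp hfst))
          (fun i hi => (hptl' i hi).comp hfst)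
          (fun i hi => (hwl' i hi).comp hfst)
          (fun p => by have := hh0nn p.1; have := hw₁nn p.1; linarith)
          (fun i hi p => hwl'nn i hi p.1)
          (fun p => by have := hsum p.1; simp only [List.map_cons, List.sum_cons] at this ⊢
                       linarith)
      set F : Q → Z := fun q =>
        comb lam z₀ ((hd q, h0 q) :: (i₁ :: i₂ :: l'').map fun i => (pt i q, w i q)) with hF_def
      have hFval : ∀ q, ¬ (0 < h0 q + w i₁ q) →
          F q = comb lam z₀ ((i₂ :: l'').map fun i => (pt i q, w i q)) := by
        intro q hq
        have hle : h0 q + w i₁ q ≤ 0 := not_lt.mp hq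
        have hq0 : h0 q = 0 := le_antisymm (by linarith [hw₁nn q]) (hh0nn q)
        have hq1 : w i₁ q = 0 := le_antisymm (by linarith [hh0nn q]) (hw₁nn q)
        simp only [hF_def, List.map_cons]
        rw [comb_cons_cons, if_neg (by rw [hq0, hq1]; norm_num), hq1,
          comb_zero_head hlam]
      have hHval : ∀ q, ¬ (0 < h0 q + w i₁ q) → ∀ r : ↥K,
          H (q, r) = comb lam z₀ ((i₂ :: l'').map fun i => (pt i q, w i q)) := by
        intro q hq r
        have hle : h0 q + w i₁ q ≤ 0 := not_lt.mp hq
        have hq0 : h0 q = 0 := le_antisymm (by linarith [hw₁nn q]) (hh0nn q)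
        have hq1 : w i₁ q = 0 := le_antisymm (by linarith [hh0nn q]) (hw₁nn q)
        simp only [hH_def, List.map_cons]
        rw [hq0, hq1, add_zero, comb_zero_head hlam]
      have hHposval : ∀ (q : Q) (hq : 0 < h0 q + w i₁ q),
          F q = H (q, ⟨w i₁ q / (h0 q + w i₁ q),
            div_nonneg (hw₁nn q) hq.le,
            div_le_one_of_le₀ (by have := hh0nn q; linarith) hq.le⟩) := by
        intro q hq
        simp only [hF_def, hH_def, List.map_cons]
        rw [comb_cons_cons, if_pos hq]
      rw [continuousAt_def]
      intro U hU
      obtain ⟨U', hU'sub, hU'open, hU'mem⟩ := mem_nhds_iff.mp hU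
      have hslice : {q₀} ×ˢ (Set.univ : Set ↥K) ⊆ H ⁻¹' U' := by
        rintro ⟨q, r⟩ ⟨hq, -⟩
        simp only [Set.mem_singleton_iff] at hq
        simp only [Set.mem_preimage]
        rw [hq, hHval q₀ hpos r, ← hFval q₀ hpos]
        exact hU'mem
      obtain ⟨u, v, hu_open, hv_open, hu_mem, hv_mem, huv⟩ :=
        generalized_tube_lemma isCompact_singleton isCompact_univ
          (hHcont.isOpen_preimage U' hU'open) hslice
      have hq₀u : q₀ ∈ u := hu_mem rfl
      refine Filter.mem_of_superset (hu_open.mem_nhds hq₀u) ?_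
      intro q hq
      simp only [Set.mem_preimage]
      apply hU'sub
      by_cases hqpos : 0 < h0 q + w i₁ q
      · rw [hHposval q hqpos]
        exact huv ⟨hq, hv_mem trivial⟩
      · rw [hFval q hqpos, ← hHval q hqpos ⟨0, le_rfl, zero_le_one⟩]
        exact huv ⟨hq, hv_mem trivial⟩

lemma sort_filter_eq {α : Type*} [LinearOrder α] (s : Finset α) (pr : α → Prop)
    [DecidablePred pr] :
    (s.sort (·≤·)).filter (fun a => decide (pr a)) = (s.filter pr).sort (·≤·) := by
  refine List.Perm.eq_of_pairwise'
    (List.Pairwise.sublist (List.filter_sublist) (s.pairwise_sort _)) (Finset.pairwise_sort _ _)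
    ((List.perm_ext_iff_of_nodup
    ((s.sort_nodup _).filter _) (Finset.sort_nodup _ _)).mpr ?_)
  intro a
  simp [List.mem_filter, Finset.mem_sort, Finset.mem_filter]

lemma sort_map_sum {α M : Type*} [LinearOrder α] [AddCommMonoid M] (s : Finset α) (f : α → M) :
    ((s.sort (·≤·)).map f).sum = ∑ i ∈ s, f i := by
  rw [← Finset.sum_map_toList]
  exact ((s.sort_perm_toList (·≤·)).map f).sum_eq

end RudinAux

/-- If `X` is a strong PP-space, `Y` a topological space and `(Z, λ)` a locally
convex equiconnected space, then every `f : X × Y → Z` which is continuous in the first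
variable and has continuous `y`-sections for a dense set of `x`'s is a pointwise limit of a
sequence of continuous maps, i.e. `(X, Y, Z)` is a Rudin `0`-triple. -/
theorem rudin_zero_triple_of_strongPP {X Y Z : Type*} [TopologicalSpace X] [TopologicalSpace Y]
    [TopologicalSpace Z] (hX : IsStrongPPSpace.{u} X)
    (lam : Z → Z → ℝ → Z) (hlam : IsEquiconnecting lam)
    (hconv : IsLocallyConvexEquiconnected lam)
    (f : X × Y → Z)
    (hsep : ∀ y : Y, Continuous fun x => f (x, y))
    (hdense : Dense {x : X | Continuous fun y => f (x, y)}) :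
    ∃ g : ℕ → X × Y → Z, (∀ n, Continuous (g n)) ∧
      ∀ q : X × Y, Filter.Tendsto (fun n => g n q) Filter.atTop (nhds (f q)) := by
  classical
  rcases isEmpty_or_nonempty (X × Y) with hE | hNE
  · refine ⟨fun _ q => f q, fun n => ?_, fun q => (hE.false q).elim⟩
    rw [continuous_iff_continuousAt]
    intro q
    exact (hE.false q).elim
  · obtain ⟨z₀⟩ : Nonempty Z := ⟨f hNE.some⟩
    set D := {x : X | Continuous fun y => f (x, y)} with hD
    obtain ⟨I, φ, p, hpart, hpD, hcond⟩ := hX D hdense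
    letI : ∀ n, LinearOrder (I n) := fun n => IsWellOrder.linearOrder WellOrderingRel
    have hφcont : ∀ n i, Continuous (φ n i) := fun n => (hpart n).1
    have hφmem : ∀ n i x, φ n i x ∈ Set.Icc (0:ℝ) 1 := fun n => (hpart n).2.1
    have hLF : ∀ n, LocallyFinite fun i => closure (support (φ n i)) :=
      fun n => (hpart n).2.2.1
    have hφsum : ∀ n x, ∑ᶠ i, φ n i x = 1 := fun n => (hpart n).2.2.2
    have hfin : ∀ (n : ℕ) (x : X), (Function.support fun i => φ n i x).Finite := by
      intro n x
      refine Set.Finite.subset ((hLF n).point_finite x) ?_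
      intro i hi
      exact subset_closure hi
    set sAct : ∀ n : ℕ, X → Finset (I n) := fun n x => (hfin n x).toFinset with hsActdef
    have hmem_sAct : ∀ n x i, i ∈ sAct n x ↔ φ n i x ≠ 0 := by
      intro n x i
      simp [hsActdef, Set.Finite.mem_toFinset, Function.mem_support]
    have hsAct_ne : ∀ n x, (sAct n x).Nonempty := by
      intro n x
      by_contra h
      rw [Finset.not_nonempty_iff_eq_empty] at h
      have hzero : ∀ i, φ n i x = 0 := by
        intro i
        by_contra hi
        have hmem : i ∈ sAct n x := (hmem_sAct n x i).2 hi
        rw [h] at hmem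
        exact absurd hmem (Finset.notMem_empty i)
      have h1 := hφsum n x
      rw [finsum_eq_zero_of_forall_eq_zero hzero] at h1
      exact zero_ne_one h1
    have hpDc : ∀ n i, Continuous fun y => f (p n i, y) := fun n i => hpD n i
    set g : ℕ → X × Y → Z := fun n q =>
      comb lam z₀ (((sAct n q.1).sort (·≤·)).map fun i => (f (p n i, q.2), φ n i q.1))
      with hgdef
    refine ⟨g, ?_, ?_⟩
    · -- continuity of each g n
      intro n
      rw [continuous_iff_continuousAt]
      rintro ⟨x₀, y₀⟩
      obtain ⟨W, hW, hWfin⟩ := hLF n x₀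
      set s₀ : Finset (I n) := hWfin.toFinset with hs₀def
      have hmem_s₀ : ∀ i, i ∈ s₀ ↔ ((closure (support (φ n i))) ∩ W).Nonempty := by
        intro i
        simp [hs₀def, Set.Finite.mem_toFinset]
      have hvanish : ∀ (x : X), x ∈ W → ∀ i, i ∉ s₀ → φ n i x = 0 := by
        intro x hx i hi
        by_contra h
        exact hi ((hmem_s₀ i).2 ⟨x, subset_closure (Function.mem_support.2 h), hx⟩)
      have hsub : ∀ x ∈ W, sAct n x ⊆ s₀ := by
        intro x hx i hi
        by_contra h
        exact (hmem_sAct n x i).1 hi (hvanish x hx i h)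
      have hsum₀ : ∀ x ∈ W, ∑ i ∈ s₀, φ n i x = 1 := by
        intro x hx
        have hss : Function.support (fun i => φ n i x) ⊆ ↑s₀ := by
          intro i hi
          exact hsub x hx ((hmem_sAct n x i).2 hi)
        exact (finsum_eq_finset_sum_of_support_subset _ hss).symm.trans (hφsum n x)
      set O : Set (X × Y) := interior W ×ˢ (Set.univ : Set Y) with hOdef
      have hOopen : IsOpen O := isOpen_interior.prod isOpen_univ
      have hq₀O : (x₀, y₀) ∈ O := ⟨mem_interior_iff_mem_nhds.2 hW, trivial⟩
      set G : X × Y → Z := fun q =>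
        comb lam z₀ ((s₀.sort (·≤·)).map fun i => (f (p n i, q.2), φ n i q.1)) with hGdef
      have hEq : Set.EqOn (g n) G O := by
        rintro ⟨x, y⟩ ⟨hx, -⟩
        have hxW : x ∈ W := interior_subset hx
        have hActEq : sAct n x = s₀.filter (fun i => φ n i x ≠ 0) := by
          ext i
          rw [hmem_sAct, Finset.mem_filter]
          constructor
          · intro h
            exact ⟨hsub x hxW ((hmem_sAct n x i).2 h), h⟩
          · exact fun h => h.2
        have hfilt : ((s₀.sort (·≤·)).map fun i => (f (p n i, y), φ n i x)).filter
            (fun pr => pr.2 ≠ 0) =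
            ((sAct n x).sort (·≤·)).map fun i => (f (p n i, y), φ n i x) := by
          rw [List.filter_map, hActEq, ← sort_filter_eq]
          congr 1
        have hnn : ∀ pr ∈ (s₀.sort (·≤·)).map fun i => (f (p n i, y), φ n i x),
            (0:ℝ) ≤ pr.2 := by
          intro pr hpr
          obtain ⟨i, -, rfl⟩ := List.mem_map.1 hpr
          exact (hφmem n i x).1
        have hne : (((s₀.sort (·≤·)).map fun i => (f (p n i, y), φ n i x)).filter
            (fun pr => pr.2 ≠ 0)) ≠ [] := by
          rw [hfilt]
          obtain ⟨i, hi⟩ := hsAct_ne n x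
          intro hcon
          have hsortnil : ((sAct n x).sort (·≤·)) = [] := List.map_eq_nil_iff.mp hcon
          have : i ∈ ((sAct n x).sort (·≤·)) := (Finset.mem_sort _).2 hi
          rw [hsortnil] at this
          exact absurd this List.not_mem_nil
        show g n (x, y) = G (x, y)
        rw [hgdef, hGdef]
        dsimp only
        rw [comb_filter hlam _ hnn hne, hfilt]
      have hcontG : ContinuousAt G (x₀, y₀) := by
        have hs₀ne : s₀.Nonempty := by
          obtain ⟨i, hi⟩ := hsAct_ne n x₀
          exact ⟨i, hsub x₀ (mem_of_mem_nhds hW) hi⟩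
        cases hsort : s₀.sort (·≤·) with
        | nil =>
          exfalso
          have hcard : s₀.card = 0 := by
            rw [← Finset.length_sort (·≤·), hsort]
            rfl
          exact Finset.Nonempty.ne_empty hs₀ne (Finset.card_eq_zero.mp hcard)
        | cons j l =>
          have hjmem : j ∈ s₀ := by
            have : j ∈ s₀.sort (·≤·) := by rw [hsort]; exact List.mem_cons_self
            exact (Finset.mem_sort _).1 this
          have hlmem : ∀ i ∈ l, i ∈ s₀ := by
            intro i hi
            have : i ∈ s₀.sort (·≤·) := by rw [hsort]; exact List.mem_cons_of_mem _ hi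
            exact (Finset.mem_sort _).1 this
          have hGO : Continuous fun q : ↥O => G (q : X × Y) := by
            have hshape : (fun q : ↥O => G (q : X × Y)) = fun q : ↥O =>
                comb lam z₀ ((f (p n j, (q : X × Y).2), φ n j (q : X × Y).1) ::
                  l.map fun i => (f (p n i, (q : X × Y).2), φ n i (q : X × Y).1)) := by
              funext q
              rw [hGdef]
              dsimp only
              rw [hsort, List.map_cons]
            rw [hshape]
            refine comb_continuous_aux hlam l.length l _ _
              (fun i (q : ↥O) => f (p n i, (q : X × Y).2))
              (fun i (q : ↥O) => φ n i (q : X × Y).1) rfl ?_ ?_ ?_ ?_ ?_ ?_ ?_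
            · exact (hpDc n j).comp (continuous_snd.comp continuous_subtype_val)
            · exact (hφcont n j).comp (continuous_fst.comp continuous_subtype_val)
            · intro i _
              exact (hpDc n i).comp (continuous_snd.comp continuous_subtype_val)
            · intro i _
              exact (hφcont n i).comp (continuous_fst.comp continuous_subtype_val)
            · intro q
              exact (hφmem n j _).1
            · intro i _ q
              exact (hφmem n i _).1
            · intro q
              have hxW : (q : X × Y).1 ∈ W := interior_subset q.2.1
              have hsum1 : (((s₀.sort (·≤·)).map fun i => φ n i (q : X × Y).1)).sum = 1 :=
                (sort_map_sum s₀ (fun i => φ n i (q : X × Y).1)).trans (hsum₀ _ hxW)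
              rw [hsort, List.map_cons, List.sum_cons] at hsum1
              exact hsum1
          have hcOn : ContinuousOn G O := continuousOn_iff_continuous_restrict.mpr hGO
          exact hcOn.continuousAt (hOopen.mem_nhds hq₀O)
      refine hcontG.congr ?_
      refine Filter.eventuallyEq_of_mem (hOopen.mem_nhds hq₀O) ?_
      intro q hq
      exact (hEq hq).symm
    · -- pointwise convergence
      rintro ⟨x, y⟩
      rw [Filter.tendsto_atTop']
      intro U hU
      obtain ⟨V, hV, hVU⟩ := hconv (f (x, y)) U hU
      have hWV : (fun x' => f (x', y)) ⁻¹' V ∈ nhds x :=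
        (hsep y).continuousAt.preimage_mem_nhds hV
      obtain ⟨n₀, hn₀⟩ := hcond x _ hWV
      refine ⟨n₀, fun n hn => ?_⟩
      have hVne : V.Nonempty := ⟨f (x, y), mem_of_mem_nhds hV⟩
      have hptV : ∀ i, i ∈ sAct n x → f (p n i, y) ∈ V := by
        intro i hi
        have hx_cl : x ∈ closure (support (φ n i)) :=
          subset_closure (Function.mem_support.2 ((hmem_sAct n x i).1 hi))
        exact hn₀ n hn i hx_cl
      have hmem : g n (x, y) ∈ lambdaInftySet lam V := by
        cases hsort : (sAct n x).sort (·≤·) with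
        | nil =>
          exfalso
          have hcard : (sAct n x).card = 0 := by
            rw [← Finset.length_sort (·≤·), hsort]
            rfl
          exact Finset.Nonempty.ne_empty (hsAct_ne n x) (Finset.card_eq_zero.mp hcard)
        | cons j l =>
          have hjmem : j ∈ sAct n x := by
            have : j ∈ (sAct n x).sort (·≤·) := by rw [hsort]; exact List.mem_cons_self
            exact (Finset.mem_sort _).1 this
          rw [hgdef]
          dsimp only
          rw [hsort, List.map_cons]
          refine comb_mem_infty hlam hVne _ _ _ (hptV j hjmem) (hφmem n j x).1 ?_
          intro pr hpr
          obtain ⟨i, hil, rfl⟩ := List.mem_map.1 hpr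
          have hi : i ∈ sAct n x := by
            have : i ∈ (sAct n x).sort (·≤·) := by rw [hsort]; exact List.mem_cons_of_mem _ hil
            exact (Finset.mem_sort _).1 this
          exact ⟨hptV i hi, (hφmem n i x).1⟩
      exact hVU hmem
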